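/- Let S ⊂ [d], S̄ = [d]∖S, 0 < α < 1, p > 0, with γᵢ/γ_k ≥ 1+p for all i ∈ S̄ (where γ_k = max_{j∈S} γⱼ). Suppose T ≥ (1/(4γ_k)) log(|S|γ_{j*}δ_{j*}(0)²/ε) with ε ≤ |S|γ_{j*}δ_{j*}(0)², and ε^p Σ_{i∈S̄} γᵢδᵢ(0)²/(|S|γ_{j*}δ_{j*}(0)²)^{1+p} ≤ α. Then Σ_{i∈S̄} γᵢ δᵢ(T)² ≤ αε, where δᵢ(T) = δᵢ(0)e^{-2γᵢT}. -/

import Mathlib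

/-- under the eigenvalue gap and condition 2, the contribution of
the large-eigenvalue coordinates S̄ to the train loss at time T is at most αε. -/
theorem large_coords_contribution_small {d : ℕ} (γ δ0 : Fin d → ℝ)
    (hγ : ∀ i, 0 < γ i) (S : Finset (Fin d)) (hS : S.Nonempty)
    (α p : ℝ) (hα0 : 0 < α) (hα1 : α < 1) (hp : 0 < p)
    (hgap : ∀ i ∈ Sᶜ, γ i / S.sup' hS γ ≥ 1 + p)
    (jstar : Fin d) (hjS : jstar ∈ S)
    (hjmin : ∀ j ∈ S, γ jstar * (δ0 jstar)^2 ≤ γ j * (δ0 j)^2)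
    (hjpos : 0 < γ jstar * (δ0 jstar)^2)
    (ε T : ℝ) (hε : 0 < ε)
    (hεle : ε ≤ S.card * (γ jstar * (δ0 jstar)^2))
    (hT : T ≥ (1 / (4 * S.sup' hS γ)) *
      Real.log (S.card * (γ jstar * (δ0 jstar)^2) / ε))
    (hcond2 : ε ^ p * ∑ i ∈ Sᶜ,
        γ i * (δ0 i)^2 / (S.card * (γ jstar * (δ0 jstar)^2)) ^ (1 + p) ≤ α) :
    (∑ i ∈ Sᶜ, γ i * (δ0 i)^2 * Real.exp (-4 * γ i * T)) ≤ α * ε := by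
  set γk := S.sup' hS γ with hγkdef
  set M : ℝ := S.card * (γ jstar * (δ0 jstar)^2) with hMdef
  have hγk : 0 < γk := by
    obtain ⟨j, hj⟩ := hS
    exact lt_of_lt_of_le (hγ j) (Finset.le_sup' γ hj)
  have hM : 0 < M := lt_of_lt_of_le hε hεle
  have hlog0 : 0 ≤ Real.log (M / ε) :=
    Real.log_nonneg ((one_le_div hε).2 hεle)
  have hT4 : Real.log (M / ε) ≤ 4 * γk * T := by
    have h4 : 0 < 4 * γk := by positivity
    calc Real.log (M / ε) = (4 * γk) * ((1 / (4 * γk)) * Real.log (M / ε)) := by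
          field_simp
      _ ≤ (4 * γk) * T := mul_le_mul_of_nonneg_left hT h4.le
  have hT0 : 0 ≤ T := by
    have h4 : 0 ≤ 4 * γk * T := le_trans hlog0 hT4
    nlinarith [h4, hγk]
  -- the key exponential bound
  have hεM1 : ε / M ≤ 1 := (div_le_one hM).2 hεle
  have hexp_le : Real.exp (-(4 * γk) * T) ≤ ε / M := by
    have : -(4 * γk) * T ≤ Real.log (ε / M) := by
      rw [Real.log_div hε.ne' hM.ne']
      have := Real.log_div hM.ne' hε.ne'
      linarith [hT4, this ▸ hT4]
    calc Real.exp (-(4 * γk) * T) ≤ Real.exp (Real.log (ε / M)) :=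
          Real.exp_le_exp.2 this
      _ = ε / M := Real.exp_log (by positivity)
  have key : ∀ i ∈ Sᶜ, Real.exp (-4 * γ i * T) ≤ (ε / M) ^ (1 + p) := by
    intro i hi
    have hgi : (1 + p) * γk ≤ γ i := by
      have := hgap i hi
      rw [ge_iff_le, le_div_iff₀ hγk] at this
      linarith
    have h1 : Real.exp (-4 * γ i * T) ≤ Real.exp ((1 + p) * (-(4 * γk) * T)) := by
      apply Real.exp_le_exp.2
      nlinarith [mul_le_mul_of_nonneg_right hgi hT0]
    have h2 : Real.exp ((1 + p) * (-(4 * γk) * T))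
        = (Real.exp (-(4 * γk) * T)) ^ (1 + p) := by
      rw [← Real.exp_mul, mul_comm]
    rw [h2] at h1
    exact le_trans h1 (Real.rpow_le_rpow (Real.exp_nonneg _) hexp_le (by linarith))
  -- bound the sum
  have hsum : (∑ i ∈ Sᶜ, γ i * (δ0 i)^2 * Real.exp (-4 * γ i * T))
      ≤ (ε / M) ^ (1 + p) * ∑ i ∈ Sᶜ, γ i * (δ0 i)^2 := by
    rw [Finset.mul_sum]
    apply Finset.sum_le_sum
    intro i hi
    rw [mul_comm ((ε / M) ^ (1 + p)) _]
    exact mul_le_mul_of_nonneg_left (key i hi) (mul_nonneg (hγ i).le (sq_nonneg _))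
  -- rewrite hcond2
  have hsum2 : ∑ i ∈ Sᶜ, γ i * (δ0 i)^2 / M ^ (1 + p)
      = (∑ i ∈ Sᶜ, γ i * (δ0 i)^2) / M ^ (1 + p) := by
    rw [Finset.sum_div]
  rw [hsum2] at hcond2
  have hMp : (0:ℝ) < M ^ (1 + p) := Real.rpow_pos_of_pos hM _
  have hεp : (0:ℝ) < ε ^ p := Real.rpow_pos_of_pos hε _
  have hSig : (∑ i ∈ Sᶜ, γ i * (δ0 i)^2) ≤ α * M ^ (1 + p) / ε ^ p := by
    rw [le_div_iff₀ hεp]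
    calc (∑ i ∈ Sᶜ, γ i * (δ0 i)^2) * ε ^ p
        = (ε ^ p * ((∑ i ∈ Sᶜ, γ i * (δ0 i)^2) / M ^ (1 + p))) * M ^ (1 + p) := by
          field_simp
      _ ≤ α * M ^ (1 + p) := mul_le_mul_of_nonneg_right hcond2 hMp.le
  calc (∑ i ∈ Sᶜ, γ i * (δ0 i)^2 * Real.exp (-4 * γ i * T))
      ≤ (ε / M) ^ (1 + p) * ∑ i ∈ Sᶜ, γ i * (δ0 i)^2 := hsum
    _ ≤ (ε / M) ^ (1 + p) * (α * M ^ (1 + p) / ε ^ p) := by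
        exact mul_le_mul_of_nonneg_left hSig (by positivity)
    _ = α * ε := by
        rw [Real.div_rpow hε.le hM.le]
        have hε1p : ε ^ (1 + p) = ε * ε ^ p := by
          rw [Real.rpow_add hε, Real.rpow_one]
        rw [hε1p]
        field_simp
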